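/- Let N be a nonnegative-integer-valued random variable with E[(1+ε)^N] < ∞ for every ε > 0, independent of an i.i.d. sequence X₁, X₂, … with subexponential distribution F. Then P[X₁+⋯+X_N > x] ∼ E[N]·(1-F(x)) as x → ∞. -/

import Mathlib

open MeasureTheory ProbabilityTheory Filter Set Asymptotics
open scoped Classical
open scoped ENNReal

/-- Tail of a distribution (measure) on `ℝ`: `F̄(x) = μ(x,∞)`. -/
noncomputable def tailP (μ : Measure ℝ) (x : ℝ) : ℝ := (μ (Set.Ioi x)).toReal

/-- Tail of the `n`-fold convolution: `P[X₁+⋯+Xₙ > x]` for i.i.d. `Xᵢ ∼ μ`. -/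
noncomputable def convTail (μ : Measure ℝ) (n : ℕ) (x : ℝ) : ℝ :=
  ((Measure.pi fun _ : Fin n => μ) {y | x < ∑ i, y i}).toReal

/-- A probability distribution on `(0,∞)` is subexponential if
`(1-F^{*n}(x))/(1-F(x)) → n` for all `n ≥ 2`. -/
def Subexponential (μ : Measure ℝ) : Prop :=
  IsProbabilityMeasure μ ∧ μ (Set.Ioi 0) = 1 ∧ (∀ x : ℝ, 0 < tailP μ x) ∧
    ∀ n : ℕ, 2 ≤ n →
      Tendsto (fun x => convTail μ n x / tailP μ x) atTop (nhds (n : ℝ))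

lemma measSumSet (n : ℕ) (x : ℝ) : MeasurableSet {y : Fin n → ℝ | x < ∑ i, y i} := by
  have : Measurable fun y : Fin n → ℝ => ∑ i, y i :=
    Finset.measurable_sum _ fun i _ => measurable_pi_apply i
  exact measurableSet_lt measurable_const this

lemma eC_prod (μ : Measure ℝ) [IsProbabilityMeasure μ] (n : ℕ) (x : ℝ) :
    (Measure.pi fun _ : Fin (n+1) => μ) {y | x < ∑ i, y i}
      = ∫⁻ t, (Measure.pi fun _ : Fin n => μ) {z | x - t < ∑ i, z i} ∂μ := by
  set e := MeasurableEquiv.piFinSuccAbove (fun _ : Fin (n+1) => ℝ) 0 with he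
  have hmp := measurePreserving_piFinSuccAbove (fun _ : Fin (n+1) => μ) 0
  have hS : MeasurableSet {y : Fin (n+1) → ℝ | x < ∑ i, y i} := measSumSet _ _
  have key : (Measure.pi fun _ : Fin (n+1) => μ) {y | x < ∑ i, y i}
      = (μ.prod (Measure.pi fun _ : Fin n => μ)) (e.symm ⁻¹' {y | x < ∑ i, y i}) := by
    rw [← hmp.map_eq, MeasurableEquiv.map_apply]
    congr 1
    ext p
    simp only [Set.mem_preimage, ← he, MeasurableEquiv.symm_apply_apply]
  have hset : (e.symm ⁻¹' {y : Fin (n+1) → ℝ | x < ∑ i, y i})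
      = {p : ℝ × (Fin n → ℝ) | x - p.1 < ∑ i, p.2 i} := by
    ext ⟨t, z⟩
    simp only [Set.mem_preimage, Set.mem_setOf_eq, he,
      MeasurableEquiv.piFinSuccAbove, MeasurableEquiv.symm_mk, MeasurableEquiv.coe_mk,
      Equiv.symm_symm]
    change x < ∑ i, (Fin.insertNthEquiv (fun _ : Fin (n+1) => ℝ) 0) (t, z) i ↔ _
    rw [Fin.insertNthEquiv_zero]
    rw [show ((Fin.consEquiv (fun _ : Fin (n+1) => ℝ)) (t, z)) = Fin.cons t z from rfl,
      Fin.sum_univ_succ]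
    simp only [Fin.cons_zero, Fin.cons_succ]
    rw [sub_lt_iff_lt_add']
  have hms : MeasurableSet {p : ℝ × (Fin n → ℝ) | x - p.1 < ∑ i, p.2 i} := by
    have h1 : Measurable fun p : ℝ × (Fin n → ℝ) => x - p.1 :=
      measurable_const.sub measurable_fst
    have h2 : Measurable fun p : ℝ × (Fin n → ℝ) => ∑ i, p.2 i :=
      Finset.measurable_sum _ fun i _ => (measurable_pi_apply i).comp measurable_snd
    exact measurableSet_lt h1 h2
  rw [key, hset, Measure.prod_apply hms]
  rfl

lemma eC_one (μ : Measure ℝ) [IsProbabilityMeasure μ] (x : ℝ) :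
    (Measure.pi fun _ : Fin 1 => μ) {y | x < ∑ i, y i} = μ (Set.Ioi x) := by
  have h := (measurePreserving_funUnique μ (Fin 1)).map_eq
  have : μ (Set.Ioi x) = (Measure.map (MeasurableEquiv.funUnique (Fin 1) ℝ)
      (Measure.pi fun _ : Fin 1 => μ)) (Set.Ioi x) := by
      exact (congrArg (fun m : Measure ℝ => m (Set.Ioi x)) h).symm
  rw [this, MeasurableEquiv.map_apply]
  congr 1
  ext y
  simp [MeasurableEquiv.funUnique, Fin.sum_univ_one, Equiv.funUnique]

lemma eC_neg (μ : Measure ℝ) [IsProbabilityMeasure μ] (hpos0 : μ (Set.Ioi 0) = 1)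
    (n : ℕ) {x : ℝ} (hx : x < 0) :
    (Measure.pi fun _ : Fin n => μ) {y | x < ∑ i, y i} = 1 := by
  have hsub : (Set.univ.pi fun _ : Fin n => Set.Ioi (0:ℝ)) ⊆ {y : Fin n → ℝ | x < ∑ i, y i} := by
    intro y hy
    have h0 : (0:ℝ) ≤ ∑ i, y i :=
      Finset.sum_nonneg fun i _ => le_of_lt (hy i (Set.mem_univ i))
    exact lt_of_lt_of_le hx h0
  have h1 : (Measure.pi fun _ : Fin n => μ) (Set.univ.pi fun _ => Set.Ioi (0:ℝ)) = 1 := by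
    rw [Measure.pi_pi]
    simp [hpos0]
  have h2 := measure_mono (μ := Measure.pi fun _ : Fin n => μ) hsub
  rw [h1] at h2
  have h3 := measure_mono (μ := Measure.pi fun _ : Fin n => μ) (Set.subset_univ {y : Fin n → ℝ | x < ∑ i, y i})
  rw [measure_univ] at h3
  exact le_antisymm h3 h2

lemma eC_succ (μ : Measure ℝ) [IsProbabilityMeasure μ] (hpos0 : μ (Set.Ioi 0) = 1)
    (n : ℕ) {x : ℝ} (hx : 0 ≤ x) :
    (Measure.pi fun _ : Fin (n+1) => μ) {y | x < ∑ i, y i}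
      = μ (Set.Ioi x) + ∫⁻ t in Set.Ioc 0 x, (Measure.pi fun _ : Fin n => μ) {z | x - t < ∑ i, z i} ∂μ := by
  rw [eC_prod]
  have hres : μ.restrict (Set.Ioi 0) = μ := by
    apply Measure.restrict_eq_self_of_ae_mem
    have : μ (Set.Ioi (0:ℝ))ᶜ = 0 := by
      rw [measure_compl measurableSet_Ioi (measure_ne_top μ _), hpos0, measure_univ, tsub_self]
    exact (ae_iff).2 (by simpa [Set.Iic_def] using this)
  have hsplit : ∫⁻ t, (Measure.pi fun _ : Fin n => μ) {z | x - t < ∑ i, z i} ∂μ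
      = ∫⁻ t in Set.Ioc 0 x ∪ Set.Ioi x, (Measure.pi fun _ : Fin n => μ) {z | x - t < ∑ i, z i} ∂μ := by
    rw [Set.Ioc_union_Ioi_eq_Ioi hx, hres]
  rw [hsplit, lintegral_union measurableSet_Ioi Set.Ioc_disjoint_Ioi_same]
  have htail : ∫⁻ t in Set.Ioi x, (Measure.pi fun _ : Fin n => μ) {z | x - t < ∑ i, z i} ∂μ
      = μ (Set.Ioi x) := by
    rw [setLIntegral_congr_fun measurableSet_Ioi
      (fun t ht => eC_neg μ hpos0 n (by simp at ht; linarith))]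
    simp
  rw [htail, add_comm]

lemma kesten (μ : Measure ℝ) (hμ : Subexponential μ) :
    ∃ C : ℝ, 1 ≤ C ∧ ∀ n x, (Measure.pi fun _ : Fin n => μ) {y | x < ∑ i, y i}
      ≤ ENNReal.ofReal (C * 2 ^ n) * μ (Set.Ioi x) := by
  obtain ⟨hprob, hpos0, hpos, htend⟩ := hμ
  haveI := hprob
  -- choose T
  have h2 := htend 2 le_rfl
  have hev : ∀ᶠ x in atTop, convTail μ 2 x / tailP μ x < 3 :=
    h2.eventually_lt_const (by norm_num)
  obtain ⟨T0, hT0⟩ := eventually_atTop.1 hev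
  set T : ℝ := max T0 0 with hTdef
  have hT0le : T0 ≤ T := le_max_left _ _
  have hTnn : (0:ℝ) ≤ T := le_max_right _ _
  have hT : ∀ x, T ≤ x → convTail μ 2 x ≤ 3 * tailP μ x := by
    intro x hx
    have := hT0 x (le_trans hT0le hx)
    have hp := hpos x
    calc convTail μ 2 x = convTail μ 2 x / tailP μ x * tailP μ x := by
          field_simp
      _ ≤ 3 * tailP μ x := by
          apply mul_le_mul_of_nonneg_right (le_of_lt this) (le_of_lt hp)
  -- basic tail facts
  have htfin : ∀ x, μ (Set.Ioi x) ≠ ∞ := fun x => measure_ne_top μ _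
  have hofReal : ∀ x, ENNReal.ofReal (tailP μ x) = μ (Set.Ioi x) := fun x =>
    ENNReal.ofReal_toReal (htfin x)
  have htail_le_one : ∀ x, tailP μ x ≤ 1 := by
    intro x
    rw [tailP, ← ENNReal.toReal_one]
    exact ENNReal.toReal_mono ENNReal.one_ne_top prob_le_one
  -- constants
  set B : ℝ := (tailP μ T)⁻¹ with hBdef
  have hBpos : 0 < B := inv_pos.2 (hpos T)
  have hB1 : 1 ≤ B := (one_le_inv₀ (hpos T)).2 (htail_le_one T)
  set c : ℕ → ℝ := fun n => Nat.rec 1 (fun _ cn => max B (1 + 2 * cn)) n with hcdef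
  have hc0 : c 0 = 1 := rfl
  have hcs : ∀ n, c (n + 1) = max B (1 + 2 * c n) := fun n => rfl
  have hc1 : ∀ n, 1 ≤ c n := by
    intro n
    induction n with
    | zero => exact le_of_eq hc0.symm
    | succ n ih => rw [hcs]; exact le_trans (by linarith) (le_max_right _ _)
  -- main induction
  have main : ∀ n, ∀ x : ℝ, (Measure.pi fun _ : Fin n => μ) {y | x < ∑ i, y i}
      ≤ ENNReal.ofReal (c n) * μ (Set.Ioi x) := by
    intro n
    induction n with
    | zero =>
      intro x
      rcases lt_or_ge x 0 with hx | hx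
      · rw [eC_neg μ hpos0 0 hx, hc0]
        have h1 : μ (Set.Ioi x) = 1 := by
          have hle := measure_mono (μ := μ) (Set.Ioi_subset_Ioi (le_of_lt hx))
          rw [hpos0] at hle
          exact le_antisymm prob_le_one hle
        rw [h1]; simp
      · have hempty : {y : Fin 0 → ℝ | x < ∑ i, y i} = ∅ := by
          ext y
          simp only [Set.mem_setOf_eq, Set.mem_empty_iff_false, iff_false, not_lt]
          simpa using hx
        rw [hempty, measure_empty]
        exact zero_le
    | succ n ih =>
      intro x
      rcases lt_or_ge x T with hx | hx
      · -- small x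
        have h1 : (Measure.pi fun _ : Fin (n+1) => μ) {y | x < ∑ i, y i} ≤ 1 := prob_le_one
        have h2' : (1:ℝ≥0∞) = ENNReal.ofReal B * μ (Set.Ioi T) := by
          rw [← hofReal T, ← ENNReal.ofReal_mul (le_of_lt hBpos), hBdef,
            inv_mul_cancel₀ (ne_of_gt (hpos T)), ENNReal.ofReal_one]
        refine le_trans h1 ?_
        rw [h2']
        apply mul_le_mul'
        · exact ENNReal.ofReal_le_ofReal (le_trans (le_max_left _ _) (le_of_eq (hcs n).symm))
        · exact measure_mono (Set.Ioi_subset_Ioi (le_of_lt hx))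
      · -- large x
        have hx0 : (0:ℝ) ≤ x := le_trans hTnn hx
        rw [eC_succ μ hpos0 n hx0]
        -- the J bound
        have h2eq : (Measure.pi fun _ : Fin 2 => μ) {y | x < ∑ i, y i}
            = μ (Set.Ioi x) + ∫⁻ t in Set.Ioc 0 x, μ (Set.Ioi (x - t)) ∂μ := by
          rw [eC_succ μ hpos0 1 hx0]
          congr 1
          exact lintegral_congr fun t => eC_one μ (x - t)
        have h2le : (Measure.pi fun _ : Fin 2 => μ) {y | x < ∑ i, y i}
            ≤ ENNReal.ofReal 2 * μ (Set.Ioi x) + μ (Set.Ioi x) := by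
          have : (Measure.pi fun _ : Fin 2 => μ) {y | x < ∑ i, y i}
              = ENNReal.ofReal (convTail μ 2 x) :=
            (ENNReal.ofReal_toReal (measure_ne_top _ _)).symm
          rw [this]
          calc ENNReal.ofReal (convTail μ 2 x) ≤ ENNReal.ofReal (3 * tailP μ x) :=
                ENNReal.ofReal_le_ofReal (hT x hx)
            _ = ENNReal.ofReal 2 * μ (Set.Ioi x) + μ (Set.Ioi x) := by
                rw [show (3:ℝ) * tailP μ x = 2 * tailP μ x + tailP μ x by ring,
                  ENNReal.ofReal_add (show (0:ℝ) ≤ 2 * tailP μ x from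
                      mul_nonneg (by norm_num) ENNReal.toReal_nonneg)
                    (show (0:ℝ) ≤ tailP μ x from ENNReal.toReal_nonneg),
                  ENNReal.ofReal_mul (by norm_num : (0:ℝ) ≤ 2), hofReal]
        have hJ : ∫⁻ t in Set.Ioc 0 x, μ (Set.Ioi (x - t)) ∂μ
            ≤ ENNReal.ofReal 2 * μ (Set.Ioi x) := by
          rw [h2eq, add_comm] at h2le
          exact (ENNReal.add_le_add_iff_right (htfin x)).1 h2le
        -- put together
        calc μ (Set.Ioi x) + ∫⁻ t in Set.Ioc 0 x,
              (Measure.pi fun _ : Fin n => μ) {z | x - t < ∑ i, z i} ∂μ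
            ≤ μ (Set.Ioi x) + ∫⁻ t in Set.Ioc 0 x,
              ENNReal.ofReal (c n) * μ (Set.Ioi (x - t)) ∂μ := by
              exact add_le_add_right (lintegral_mono fun t => ih (x - t)) _
          _ = μ (Set.Ioi x) + ENNReal.ofReal (c n) *
              ∫⁻ t in Set.Ioc 0 x, μ (Set.Ioi (x - t)) ∂μ := by
              rw [lintegral_const_mul' _ _ ENNReal.ofReal_ne_top]
          _ ≤ μ (Set.Ioi x) + ENNReal.ofReal (c n) * (ENNReal.ofReal 2 * μ (Set.Ioi x)) := by
              exact add_le_add_right (mul_le_mul_right hJ _) _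
          _ = ENNReal.ofReal (1 + 2 * c n) * μ (Set.Ioi x) := by
              rw [ENNReal.ofReal_add (by norm_num) (by linarith [hc1 n] : (0:ℝ) ≤ 2 * c n),
                add_mul, ENNReal.ofReal_one, one_mul,
                ENNReal.ofReal_mul (by norm_num : (0:ℝ) ≤ 2)]
              ring
          _ ≤ ENNReal.ofReal (c (n+1)) * μ (Set.Ioi x) := by
              apply mul_le_mul_left
              exact ENNReal.ofReal_le_ofReal (le_trans (le_max_right _ _) (le_of_eq (hcs n).symm))
  -- bound c n
  have hcb : ∀ n, c n ≤ (B + 1) * 2 ^ n := by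
    have key : ∀ n, c n + 1 ≤ (B + 1) * 2 ^ n := by
      intro n
      induction n with
      | zero => simp [hc0]; linarith
      | succ n ih =>
        have h2n : (1:ℝ) ≤ 2 ^ n := one_le_pow₀ (by norm_num)
        rw [hcs, pow_succ]
        have hBb : B ≤ (B + 1) * (2 ^ n * 2) - 1 := by nlinarith
        have hcc : 1 + 2 * c n ≤ (B + 1) * (2 ^ n * 2) - 1 := by nlinarith
        have := max_le hBb hcc
        linarith
    intro n
    have := key n
    linarith
  refine ⟨B + 1, by linarith, fun n x => ?_⟩
  refine le_trans (main n x) (mul_le_mul_left (ENNReal.ofReal_le_ofReal (hcb n)) _)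

lemma joint_law {Ω : Type} [MeasurableSpace Ω] (P : Measure Ω) [IsProbabilityMeasure P]
    (μ : Measure ℝ) [IsProbabilityMeasure μ]
    (X : ℕ → Ω → ℝ) (hmeas : ∀ i, Measurable (X i))
    (hindep : iIndepFun X P)
    (hlaw : ∀ i, Measure.map (X i) P = μ) (n : ℕ) :
    Measure.map (fun ω => fun i : Fin n => X i ω) P = Measure.pi (fun _ : Fin n => μ) := by
  have hY : Measurable (fun ω => fun i : Fin n => X i ω) :=
    measurable_pi_lambda _ fun i => hmeas i
  refine (Measure.pi_eq ?_).symm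
  intro s hs
  rw [Measure.map_apply hY (MeasurableSet.univ_pi hs)]
  set s' : ℕ → Set ℝ := fun k => if h : k < n then s ⟨k, h⟩ else Set.univ with hs'def
  have hs' : ∀ k, MeasurableSet (s' k) := by
    intro k
    by_cases h : k < n
    · simpa [hs'def, h] using hs ⟨k, h⟩
    · simp [hs'def, h]
  have hpre : (fun ω => fun i : Fin n => X i ω) ⁻¹' (Set.univ.pi s)
      = ⋂ k ∈ Finset.range n, X k ⁻¹' (s' k) := by
    ext ω
    simp only [Set.mem_preimage, Set.mem_univ_pi, Set.mem_iInter, Finset.mem_range]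
    constructor
    · intro h k hk
      simpa [hs'def, hk] using h ⟨k, hk⟩
    · intro h i
      have := h i.1 i.2
      simpa [hs'def, i.2] using this
  rw [hpre, hindep.measure_inter_preimage_eq_mul (Finset.range n) (fun k hk => hs' k)]
  have hterm : ∀ k, P (X k ⁻¹' s' k) = μ (s' k) := by
    intro k
    rw [← hlaw k, Measure.map_apply (hmeas k) (hs' k)]
  calc ∏ k ∈ Finset.range n, P (X k ⁻¹' s' k) = ∏ k ∈ Finset.range n, μ (s' k) := by
        exact Finset.prod_congr rfl fun k _ => hterm k
    _ = ∏ i : Fin n, μ (s' i) := (Fin.prod_univ_eq_prod_range (fun k => μ (s' k)) n).symm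
    _ = ∏ i : Fin n, μ (s i) := by
        apply Finset.prod_congr rfl
        intro i _
        congr 1
        simp [hs'def, i.2]

lemma event_eq {Ω : Type} [MeasurableSpace Ω] (P : Measure Ω) [IsProbabilityMeasure P]
    (μ : Measure ℝ) [IsProbabilityMeasure μ]
    (X : ℕ → Ω → ℝ) (hmeas : ∀ i, Measurable (X i))
    (hindep : iIndepFun X P)
    (hlaw : ∀ i, Measure.map (X i) P = μ) (n : ℕ) (x : ℝ) :
    P {ω | x < ∑ i ∈ Finset.range n, X i ω}
      = (Measure.pi fun _ : Fin n => μ) {y | x < ∑ i, y i} := by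
  have hY : Measurable (fun ω => fun i : Fin n => X i ω) :=
    measurable_pi_lambda _ fun i => hmeas i
  have hpre : {ω | x < ∑ i ∈ Finset.range n, X i ω}
      = (fun ω => fun i : Fin n => X i ω) ⁻¹' {y | x < ∑ i, y i} := by
    ext ω
    simp only [Set.mem_setOf_eq, Set.mem_preimage]
    rw [Fin.sum_univ_eq_sum_range (fun k => X k ω) n]
  rw [hpre, ← Measure.map_apply hY (measSumSet n x),
    joint_law P μ X hmeas hindep hlaw n]

lemma decomp {Ω : Type} [MeasurableSpace Ω] (P : Measure Ω) [IsProbabilityMeasure P]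
    (μ : Measure ℝ) [IsProbabilityMeasure μ]
    (N : Ω → ℕ) (hNmeas : Measurable N)
    (X : ℕ → Ω → ℝ) (hmeas : ∀ i, Measurable (X i))
    (hindep : iIndepFun X P)
    (hlaw : ∀ i, Measure.map (X i) P = μ)
    (hNindep : IndepFun N (fun ω => fun i => X i ω) P) (x : ℝ) :
    P {ω | x < ∑ i ∈ Finset.range (N ω), X i ω}
      = ∑' n, P (N ⁻¹' {n}) * (Measure.pi fun _ : Fin n => μ) {y | x < ∑ i, y i} := by
  have hBmeas : ∀ n : ℕ, MeasurableSet {ω | x < ∑ i ∈ Finset.range n, X i ω} := by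
    intro n
    exact measurableSet_lt measurable_const (Finset.measurable_sum _ fun i _ => hmeas i)
  have hunion : {ω | x < ∑ i ∈ Finset.range (N ω), X i ω}
      = ⋃ n, (N ⁻¹' {n} ∩ {ω | x < ∑ i ∈ Finset.range n, X i ω}) := by
    ext ω
    simp only [Set.mem_setOf_eq, Set.mem_iUnion, Set.mem_inter_iff, Set.mem_preimage,
      Set.mem_singleton_iff]
    constructor
    · intro h; exact ⟨N ω, rfl, h⟩
    · rintro ⟨n, hn, h⟩; rw [hn]; exact h
  rw [hunion, measure_iUnion]
  · congr 1
    ext n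
    -- independence step
    have hT : MeasurableSet {f : ℕ → ℝ | x < ∑ i ∈ Finset.range n, f i} :=
      measurableSet_lt measurable_const
        (Finset.measurable_sum _ fun i _ => measurable_pi_apply i)
    have hpre : {ω | x < ∑ i ∈ Finset.range n, X i ω}
        = (fun ω => fun i => X i ω) ⁻¹' {f : ℕ → ℝ | x < ∑ i ∈ Finset.range n, f i} := rfl
    rw [hpre, hNindep.measure_inter_preimage_eq_mul _ _ (measurableSet_singleton n) hT, ← hpre,
      event_eq P μ X hmeas hindep hlaw n x]
  · intro m n hmn
    apply Set.disjoint_left.2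
    rintro ω ⟨hm, _⟩ ⟨hn, _⟩
    exact hmn (by rw [← hm, ← hn])
  · intro n
    exact (hNmeas (measurableSet_singleton n)).inter (hBmeas n)

lemma pgf_sum {Ω : Type} [MeasurableSpace Ω] (P : Measure Ω) [IsProbabilityMeasure P]
    (N : Ω → ℕ) (hNmeas : Measurable N)
    (h : Integrable (fun ω => (2:ℝ) ^ N ω) P) :
    Summable (fun n : ℕ => (P (N ⁻¹' {n})).toReal * 2 ^ n) := by
  have hfin : ∫⁻ ω, ENNReal.ofReal ((2:ℝ) ^ N ω) ∂P ≠ ∞ := by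
    have := h.hasFiniteIntegral
    rw [hasFiniteIntegral_iff_norm] at this
    refine ne_of_lt (lt_of_le_of_lt (le_of_eq ?_) this)
    apply lintegral_congr
    intro ω
    rw [Real.norm_of_nonneg (by positivity)]
  have hg : Measurable fun k : ℕ => ENNReal.ofReal ((2:ℝ) ^ k) := measurable_from_top
  have hmap : ∫⁻ ω, ENNReal.ofReal ((2:ℝ) ^ N ω) ∂P
      = ∑' k : ℕ, ENNReal.ofReal ((2:ℝ) ^ k) * P (N ⁻¹' {k}) := by
    rw [← lintegral_map hg hNmeas, lintegral_countable']
    congr 1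
    ext k
    rw [Measure.map_apply hNmeas (measurableSet_singleton k)]
  rw [hmap] at hfin
  have hsumm := ENNReal.summable_toReal hfin
  apply Summable.congr hsumm
  intro k
  rw [ENNReal.toReal_mul, ENNReal.toReal_ofReal (by positivity)]
  ring

lemma expectation_eq {Ω : Type} [MeasurableSpace Ω] (P : Measure Ω) [IsProbabilityMeasure P]
    (N : Ω → ℕ) (hNmeas : Measurable N)
    (hint : Integrable (fun ω => ((N ω : ℝ))) P) :
    ∫ ω, (N ω : ℝ) ∂P = ∑' n : ℕ, (P (N ⁻¹' {n})).toReal * n := by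
  have hg : Measurable fun k : ℕ => (k : ℝ) := measurable_from_top
  have h1 : ∫ ω, (N ω : ℝ) ∂P = ∫ k, (k : ℝ) ∂(Measure.map N P) := by
    rw [integral_map hNmeas.aemeasurable hg.aestronglyMeasurable]
  have hint' : Integrable (fun k : ℕ => (k : ℝ)) (Measure.map N P) := by
    rw [integrable_map_measure hg.aestronglyMeasurable hNmeas.aemeasurable]
    exact hint
  rw [h1, integral_countable' hint']
  congr 1
  ext k
  rw [measureReal_def, Measure.map_apply hNmeas (measurableSet_singleton k), smul_eq_mul]

/-- if `E[(1+ε)^N] < ∞` for all `ε > 0` and `N` is independent of the i.i.d.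
subexponential sequence `X₁, X₂, …`, then `P[X₁+⋯+X_N > x] ∼ E[N]·(1-F(x))` as `x → ∞`. -/
theorem random_sum_tail_asymp
    {Ω : Type} [MeasurableSpace Ω] (P : Measure Ω) [IsProbabilityMeasure P]
    (μ : Measure ℝ) (hμ : Subexponential μ)
    (N : Ω → ℕ) (hNmeas : Measurable N)
    (hpgf : ∀ ε : ℝ, 0 < ε → Integrable (fun ω => (1 + ε) ^ N ω) P)
    (X : ℕ → Ω → ℝ) (hmeas : ∀ i, Measurable (X i))
    (hindep : iIndepFun X P)
    (hlaw : ∀ i, Measure.map (X i) P = μ)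
    (hNindep : IndepFun N (fun ω => fun i => X i ω) P) :
    Tendsto (fun x =>
        (P {ω | x < ∑ i ∈ Finset.range (N ω), X i ω}).toReal / tailP μ x)
      atTop (nhds (∫ ω, (N ω : ℝ) ∂P)) := by
  haveI hprob : IsProbabilityMeasure μ := hμ.1
  have hpos : ∀ x : ℝ, 0 < tailP μ x := hμ.2.2.1
  obtain ⟨C, hC1, hK⟩ := kesten μ hμ
  set q : ℕ → ℝ := fun n => (P (N ⁻¹' {n})).toReal with hqdef
  have hqnn : ∀ n, 0 ≤ q n := fun n => ENNReal.toReal_nonneg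
  -- integrable 2^N
  have h2int : Integrable (fun ω => (2:ℝ) ^ N ω) P := by
    have h := hpgf 1 one_pos
    have : (fun ω => ((1:ℝ) + 1) ^ N ω) = fun ω => (2:ℝ) ^ N ω := by
      funext ω; norm_num
    rwa [this] at h
  -- N integrable
  have hNint : Integrable (fun ω => ((N ω : ℝ))) P := by
    apply h2int.mono
    · exact (measurable_from_top.comp hNmeas).aestronglyMeasurable
    · apply ae_of_all
      intro ω
      rw [Real.norm_natCast, Real.norm_of_nonneg (by positivity)]
      exact_mod_cast le_of_lt (Nat.lt_two_pow_self (n := N ω))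
  -- pointwise identity
  have hid : ∀ x : ℝ, (P {ω | x < ∑ i ∈ Finset.range (N ω), X i ω}).toReal / tailP μ x
      = ∑' n, q n * (convTail μ n x / tailP μ x) := by
    intro x
    rw [decomp P μ N hNmeas X hmeas hindep hlaw hNindep x,
      ENNReal.tsum_toReal_eq (fun n => ENNReal.mul_ne_top (measure_ne_top _ _) (measure_ne_top _ _)),
      ← tsum_div_const]
    congr 1
    ext n
    rw [ENNReal.toReal_mul, mul_div_assoc]
    rfl
  have heq : (fun x => (P {ω | x < ∑ i ∈ Finset.range (N ω), X i ω}).toReal / tailP μ x)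
      = fun x => ∑' n, q n * (convTail μ n x / tailP μ x) := funext hid
  rw [heq, expectation_eq P N hNmeas hNint]
  -- convert target sum
  have htsum : ∑' n : ℕ, q n * (n:ℝ) = ∑' n : ℕ, q n * (n:ℝ) := rfl
  -- dominated convergence
  apply tendsto_tsum_of_dominated_convergence (bound := fun n : ℕ => q n * (C * 2 ^ n))
  · apply Summable.congr (Summable.mul_left C (pgf_sum P N hNmeas h2int))
    intro n
    simp only [hqdef]
    ring
  · -- pointwise limits
    intro n
    have key : Tendsto (fun x => convTail μ n x / tailP μ x) atTop (nhds (n:ℝ)) := by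
      match n with
      | 0 =>
        have hev : ∀ᶠ x : ℝ in atTop, convTail μ 0 x / tailP μ x = 0 := by
          filter_upwards [eventually_ge_atTop (0:ℝ)] with x hx
          have hempty : {y : Fin 0 → ℝ | x < ∑ i, y i} = ∅ := by
            ext y
            simp only [Set.mem_setOf_eq, Set.mem_empty_iff_false, iff_false, not_lt]
            simpa using hx
          rw [convTail, hempty]
          simp
        rw [show ((0:ℕ):ℝ) = 0 by norm_num]
        exact Tendsto.congr' (EventuallyEq.symm hev) tendsto_const_nhds
      | 1 =>
        have hev : ∀ x : ℝ, convTail μ 1 x / tailP μ x = 1 := by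
          intro x
          rw [convTail, eC_one μ x]
          exact div_self (ne_of_gt (hpos x))
        rw [show ((1:ℕ):ℝ) = 1 by norm_num]
        simp only [hev]
        exact tendsto_const_nhds
      | (n+2) => exact hμ.2.2.2 (n+2) (by omega)
    exact key.const_mul (q n)
  · -- domination
    apply Filter.Eventually.of_forall
    intro x k
    have hratio : convTail μ k x / tailP μ x ≤ C * 2 ^ k := by
      rw [div_le_iff₀ (hpos x)]
      have h1 := hK k x
      have h2 : ((Measure.pi fun _ : Fin k => μ) {y | x < ∑ i, y i}).toReal
          ≤ (ENNReal.ofReal (C * 2 ^ k) * μ (Set.Ioi x)).toReal := by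
        apply ENNReal.toReal_mono _ h1
        exact ENNReal.mul_ne_top ENNReal.ofReal_ne_top (measure_ne_top _ _)
      rw [ENNReal.toReal_mul, ENNReal.toReal_ofReal (by positivity)] at h2
      exact h2
    have hnn : 0 ≤ convTail μ k x / tailP μ x :=
      div_nonneg ENNReal.toReal_nonneg (le_of_lt (hpos x))
    rw [Real.norm_of_nonneg (mul_nonneg (hqnn k) hnn)]
    exact mul_le_mul_of_nonneg_left hratio (hqnn k)
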